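/- Let K ⊆ L be a separable field extension of degree 2 with char K ≠ 2, and let f be the nontrivial element of Gal(L/K). Suppose δ ∈ L satisfies δ² ∈ K and L = K(δ), and let d ∈ PSL₂(L) be the image of diag(δ, δ^{-1}). Then d is fixed by the induced action of f on PSL₂(L), the subgroup ⟨PSL₂(K), d⟩ of PSL₂(L) contains PSL₂(K) as a subgroup of index 2, and the fixed-point subgroup of f acting on PSL₂(L) equals ⟨PSL₂(K), d⟩. -/

import Mathlib

open Matrix

variable (F : Type*) [Field F]

/-- `SL₂(F)`. -/
abbrev SL2 := Matrix.SpecialLinearGroup (Fin 2) F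

/-- `PSL₂(F) = SL₂(F)/{±I}` (the center of `SL₂(F)`). -/
abbrev PSL2 := SL2 F ⧸ Subgroup.center (SL2 F)

variable {F} in
/-- The diagonal matrix `diag(t, t⁻¹)` as an element of `SL₂(F)`. -/
def sl2diag (t : Fˣ) : SL2 F :=
  ⟨!![(t : F), 0; 0, ((t⁻¹ : Fˣ) : F)], by simp [Matrix.det_fin_two_of]⟩

variable {F} in
lemma center_le_comap (σ : F →+* F) :
    Subgroup.center (SL2 F) ≤
      Subgroup.comap (Matrix.SpecialLinearGroup.map σ) (Subgroup.center (SL2 F)) := by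
  intro A hA
  rw [Subgroup.mem_comap, Matrix.SpecialLinearGroup.mem_center_iff] at *
  obtain ⟨r, hr, hrA⟩ := hA
  refine ⟨σ r, by rw [← map_pow, hr, _root_.map_one], ?_⟩
  have : ((Matrix.SpecialLinearGroup.map σ A : SL2 F) : Matrix (Fin 2) (Fin 2) F)
      = (A : Matrix (Fin 2) (Fin 2) F).map σ := rfl
  rw [this, ← hrA]
  ext i j
  by_cases h : i = j <;>
    simp [Matrix.scalar_apply, Matrix.diagonal_apply, Matrix.map_apply, h]

variable {F} in
/-- The action of a field endomorphism `σ` of `F` on `PSL₂(F)`, induced by the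
entrywise action on `SL₂(F)`. -/
def psl2Map (σ : F →+* F) : PSL2 F →* PSL2 F :=
  QuotientGroup.map _ _ (Matrix.SpecialLinearGroup.map σ) (center_le_comap σ)

/-- `PSL₂(K)` viewed as a subgroup of `PSL₂(L)` via the inclusion `K ⊆ L`. -/
def pslK (K L : Type*) [Field K] [Field L] [Algebra K L] : Subgroup (PSL2 L) :=
  ((QuotientGroup.mk' (Subgroup.center (SL2 L))).comp
    (Matrix.SpecialLinearGroup.map (algebraMap K L))).range

section Aux
variable {K L : Type*} [Field K] [Field L] [Algebra K L]

lemma decomp_aux {δ : L} {c : K} (hc : algebraMap K L c = δ ^ 2)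
    (hgen : Algebra.adjoin K {δ} = ⊤) (x : L) :
    ∃ a b : K, x = algebraMap K L a + algebraMap K L b * δ := by
  let S : Subalgebra K L :=
  { carrier := {x | ∃ a b : K, x = algebraMap K L a + algebraMap K L b * δ}
    mul_mem' := by
      rintro x y ⟨a, b, rfl⟩ ⟨a', b', rfl⟩
      refine ⟨a*a' + b*b'*c, a*b' + a'*b, ?_⟩
      simp only [map_add, RingHom.map_mul, hc]
      ring
    add_mem' := by
      rintro x y ⟨a, b, rfl⟩ ⟨a', b', rfl⟩
      exact ⟨a + a', b + b', by simp only [map_add]; ring⟩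
    algebraMap_mem' := fun a => ⟨a, 0, by simp⟩
    one_mem' := ⟨1, 0, by simp⟩
    zero_mem' := ⟨0, 0, by simp⟩ }
  have hδS : δ ∈ S := ⟨0, 1, by simp⟩
  have hle : Algebra.adjoin K {δ} ≤ S := Algebra.adjoin_le (Set.singleton_subset_iff.mpr hδS)
  rw [hgen] at hle
  exact hle Algebra.mem_top

lemma exists_lift (A : SL2 L)
    (h : ∀ i j, ∃ a : K, algebraMap K L a = (A : Matrix (Fin 2) (Fin 2) L) i j) :
    ∃ B : SL2 K, Matrix.SpecialLinearGroup.map (algebraMap K L) B = A := by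
  choose M hM using h
  have hmap : (Matrix.of M).map (algebraMap K L) = (A : Matrix (Fin 2) (Fin 2) L) := by
    ext i j; exact hM i j
  have hdet : (Matrix.of M).det = 1 := by
    apply (algebraMap K L).injective
    rw [RingHom.map_det, RingHom.mapMatrix_apply, hmap, A.2, _root_.map_one]
  exact ⟨⟨Matrix.of M, hdet⟩, Subtype.ext hmap⟩

end Aux

section SL2Lemmas
variable {F}

lemma neg_one_mem_center : (-1 : SL2 F) ∈ Subgroup.center (SL2 F) := by
  rw [Matrix.SpecialLinearGroup.mem_center_iff]
  refine ⟨-1, by norm_num, ?_⟩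
  ext i j
  fin_cases i <;> fin_cases j <;>
    simp [Matrix.scalar_apply, Matrix.diagonal_apply]

lemma mem_center_iff' (z : SL2 F) :
    z ∈ Subgroup.center (SL2 F) ↔ z = 1 ∨ z = -1 := by
  constructor
  · intro hz
    rw [Matrix.SpecialLinearGroup.mem_center_iff] at hz
    obtain ⟨r, hr, hrz⟩ := hz
    have hr2 : r ^ 2 = 1 := by simpa using hr
    have hr' : (r - 1) * (r + 1) = 0 := by linear_combination hr2
    rcases mul_eq_zero.mp hr' with h | h
    · left; apply Subtype.ext
      rw [← hrz, sub_eq_zero.mp h]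
      simp
    · right; apply Subtype.ext
      rw [← hrz, eq_neg_of_add_eq_zero_left h]
      ext i j
      fin_cases i <;> fin_cases j <;>
        simp [Matrix.scalar_apply, Matrix.diagonal_apply]
  · rintro (rfl | rfl)
    exacts [Subgroup.one_mem _, neg_one_mem_center]

lemma mk_eq_mk_iff (A B : SL2 F) :
    QuotientGroup.mk' (Subgroup.center (SL2 F)) A
      = QuotientGroup.mk' (Subgroup.center (SL2 F)) B ↔ A = B ∨ A = -B := by
  rw [QuotientGroup.mk'_eq_mk']
  constructor
  · rintro ⟨z, hz, rfl⟩
    rcases (mem_center_iff' z).mp hz with rfl | rfl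
    · left; simp
    · right; simp
  · rintro (rfl | rfl)
    · exact ⟨1, Subgroup.one_mem _, mul_one _⟩
    · exact ⟨-1, neg_one_mem_center, by simp⟩

lemma sl2diag_coe (t : Fˣ) :
    ((sl2diag t : SL2 F) : Matrix (Fin 2) (Fin 2) F) = !![(t : F), 0; 0, ((t⁻¹ : Fˣ) : F)] := rfl

end SL2Lemmas

/-- Let `K ⊆ L` be a separable field extension of degree 2 with
`char K ≠ 2`, `f` the nontrivial element of `Gal(L/K)`, and `δ ∈ L` with `δ² ∈ K` and
`L = K(δ)`. Let `d ∈ PSL₂(L)` be the image of `diag(δ, δ⁻¹)`. Then `d` is fixed by the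
induced action of `f` on `PSL₂(L)`, the subgroup `⟨PSL₂(K), d⟩` contains `PSL₂(K)` with
index 2, and the fixed-point subgroup of `f` on `PSL₂(L)` equals `⟨PSL₂(K), d⟩`. -/
theorem stmt15 {K L : Type*} [Field K] [Field L] [Algebra K L]
    (hchar : ringChar K ≠ 2) [Algebra.IsSeparable K L]
    (hdim : Module.finrank K L = 2)
    (f : L ≃ₐ[K] L) (hf : f ≠ AlgEquiv.refl)
    (δ : Lˣ) (hδK : ∃ c : K, algebraMap K L c = (δ : L) ^ 2)
    (hgen : Algebra.adjoin K {(δ : L)} = ⊤) :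
    psl2Map (f : L →+* L)
        (QuotientGroup.mk' (Subgroup.center (SL2 L)) (sl2diag δ)) =
      QuotientGroup.mk' (Subgroup.center (SL2 L)) (sl2diag δ) ∧
    (pslK K L).relIndex
      (pslK K L ⊔ Subgroup.closure
        {QuotientGroup.mk' (Subgroup.center (SL2 L)) (sl2diag δ)}) = 2 ∧
    ∀ x : PSL2 L, psl2Map (f : L →+* L) x = x ↔
      x ∈ pslK K L ⊔ Subgroup.closure
        {QuotientGroup.mk' (Subgroup.center (SL2 L)) (sl2diag δ)} := by
  obtain ⟨c, hc⟩ := hδK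
  have hinj := (algebraMap K L).injective
  have hδ0 : (δ : L) ≠ 0 := δ.ne_zero
  have h2L : (2 : L) ≠ 0 := by
    have h2K : (2 : K) ≠ 0 := Ring.two_ne_zero hchar
    intro h
    apply h2K
    apply hinj
    rw [map_ofNat, h, map_zero]
  -- f δ = -δ
  have hfδ : f (δ : L) = -(δ : L) := by
    have h2 : f (δ : L) ^ 2 = (δ : L) ^ 2 := by
      rw [← map_pow, ← hc, AlgEquiv.commutes, hc]
    have h3 : (f (δ : L) - δ) * (f (δ : L) + δ) = 0 := by linear_combination h2
    rcases mul_eq_zero.mp h3 with h | h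
    · exfalso
      apply hf
      have hδeq : f (δ : L) = (δ : L) := sub_eq_zero.mp h
      have hle : Algebra.adjoin K {(δ : L)} ≤
          AlgHom.equalizer (f : L →ₐ[K] L) (AlgHom.id K L) :=
        Algebra.adjoin_le (Set.singleton_subset_iff.mpr hδeq)
      rw [hgen] at hle
      ext x
      exact hle (Algebra.mem_top (A := L) (x := x))
    · exact eq_neg_of_add_eq_zero_left h
  have hfδ' : f (((δ⁻¹ : Lˣ) : L)) = -((δ⁻¹ : Lˣ) : L) := by
    rw [Units.val_inv_eq_inv_val, map_inv₀, hfδ]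
    exact neg_inv.symm
  -- eigenspace decompositions
  have hfix : ∀ x : L, f x = x ↔ ∃ a : K, algebraMap K L a = x := by
    intro x
    constructor
    · intro h
      obtain ⟨a, b, rfl⟩ := decomp_aux hc hgen x
      rw [map_add, AlgEquiv.commutes, _root_.map_mul, AlgEquiv.commutes, hfδ] at h
      have hb : (2 : L) * (algebraMap K L b * δ) = 0 := by linear_combination -h
      have hb0 : algebraMap K L b * δ = 0 := by
        rcases mul_eq_zero.mp hb with h' | h'
        · exact absurd h' h2L
        · exact h'
      exact ⟨a, by rw [hb0, add_zero]⟩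
    · rintro ⟨a, rfl⟩
      exact f.commutes a
  have hneg : ∀ x : L, f x = -x ↔ ∃ b : K, algebraMap K L b * δ = x := by
    intro x
    constructor
    · intro h
      obtain ⟨a, b, rfl⟩ := decomp_aux hc hgen x
      rw [map_add, AlgEquiv.commutes, _root_.map_mul, AlgEquiv.commutes, hfδ] at h
      have ha : (2 : L) * (algebraMap K L a) = 0 := by linear_combination h
      have ha0 : algebraMap K L a = 0 := by
        rcases mul_eq_zero.mp ha with h' | h'
        · exact absurd h' h2L
        · exact h'
      exact ⟨b, by rw [ha0, zero_add]⟩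
    · rintro ⟨b, rfl⟩
      rw [_root_.map_mul, AlgEquiv.commutes, hfδ, mul_neg]
  -- notation
  set π := QuotientGroup.mk' (Subgroup.center (SL2 L)) with hπ
  set d : PSL2 L := π (sl2diag δ) with hd
  set H : Subgroup (PSL2 L) := pslK K L ⊔ Subgroup.closure {d} with hH
  have hmk : ∀ A : SL2 L, psl2Map (f : L →+* L) (π A)
      = π (Matrix.SpecialLinearGroup.map (f : L →+* L) A) :=
    fun A => rfl
  have hmco : ∀ A : SL2 L,
      ((Matrix.SpecialLinearGroup.map (f : L →+* L) A : SL2 L) : Matrix (Fin 2) (Fin 2) L)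
        = (A : Matrix (Fin 2) (Fin 2) L).map (f : L →+* L) := fun _ => rfl
  have hfapp : ∀ x : L, (f : L →+* L) x = f x := fun _ => rfl
  have hmcoK : ∀ B : SL2 K,
      ((Matrix.SpecialLinearGroup.map (algebraMap K L) B : SL2 L) : Matrix (Fin 2) (Fin 2) L)
        = (B : Matrix (Fin 2) (Fin 2) K).map (algebraMap K L) := fun _ => rfl
  -- part 1
  have hmapdiag : Matrix.SpecialLinearGroup.map (f : L →+* L) (sl2diag δ) = -(sl2diag δ) := by
    apply Subtype.ext
    rw [hmco, Matrix.SpecialLinearGroup.coe_neg]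
    ext i j
    fin_cases i <;> fin_cases j <;>
      simp [sl2diag_coe, Matrix.map_apply, hfapp, hfδ, hfδ']
  have part1 : psl2Map (f : L →+* L) d = d := by
    rw [hd, hmk, mk_eq_mk_iff, hmapdiag]
    exact Or.inr rfl
  -- commutation with K-points
  have hcomm : ∀ B : SL2 K,
      Matrix.SpecialLinearGroup.map (f : L →+* L)
          (Matrix.SpecialLinearGroup.map (algebraMap K L) B)
        = Matrix.SpecialLinearGroup.map (algebraMap K L) B := by
    intro B
    apply Subtype.ext
    rw [hmco]
    ext i j
    show (f : L →+* L) (algebraMap K L (B i j)) = algebraMap K L (B i j)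
    rw [hfapp]
    exact f.commutes _
  have hmemK : ∀ (A : SL2 L) (B : SL2 K),
      Matrix.SpecialLinearGroup.map (algebraMap K L) B = A → π A ∈ pslK K L :=
    fun A B hB => ⟨B, congrArg π hB⟩
  -- key entry-level dichotomy
  have key : ∀ A : SL2 L, psl2Map (f : L →+* L) (π A) = π A →
      (∃ B : SL2 K, Matrix.SpecialLinearGroup.map (algebraMap K L) B = A) ∨
      (∃ B : SL2 K, Matrix.SpecialLinearGroup.map (algebraMap K L) B = A * sl2diag δ) := by
    intro A hA
    rw [hmk, mk_eq_mk_iff] at hA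
    rcases hA with h | h
    · left
      apply exists_lift
      intro i j
      apply (hfix _).mp
      have := congrArg (fun M : SL2 L => (M : Matrix (Fin 2) (Fin 2) L) i j) h
      simp only [hmco, Matrix.map_apply] at this
      rw [← hfapp]
      exact this
    · right
      have hAij : ∀ i j, f ((A : Matrix (Fin 2) (Fin 2) L) i j)
          = -((A : Matrix (Fin 2) (Fin 2) L) i j) := by
        intro i j
        have := congrArg (fun M : SL2 L => (M : Matrix (Fin 2) (Fin 2) L) i j) h
        simp only [hmco, Matrix.map_apply, Matrix.SpecialLinearGroup.coe_neg,
          Matrix.neg_apply] at this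
        rw [← hfapp]
        exact this
      apply exists_lift
      intro i j
      have hcoe : ((A * sl2diag δ : SL2 L) : Matrix (Fin 2) (Fin 2) L)
          = (A : Matrix (Fin 2) (Fin 2) L) * (sl2diag δ : Matrix (Fin 2) (Fin 2) L) :=
        Matrix.SpecialLinearGroup.coe_mul _ _
      fin_cases j
      · obtain ⟨b, hb⟩ := (hneg _).mp (hAij i 0)
        refine ⟨b * c, ?_⟩
        show algebraMap K L (b * c)
            = ((A : Matrix (Fin 2) (Fin 2) L) * (sl2diag δ : Matrix (Fin 2) (Fin 2) L)) i 0
        have : ((A : Matrix (Fin 2) (Fin 2) L) * (sl2diag δ : Matrix (Fin 2) (Fin 2) L)) i 0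
            = (A : Matrix (Fin 2) (Fin 2) L) i 0 * (δ : L) := by
          simp [sl2diag, Matrix.mul_apply, Fin.sum_univ_two]
        rw [this, ← hb, RingHom.map_mul, hc]
        ring
      · obtain ⟨b, hb⟩ := (hneg _).mp (hAij i 1)
        refine ⟨b, ?_⟩
        show algebraMap K L b
            = ((A : Matrix (Fin 2) (Fin 2) L) * (sl2diag δ : Matrix (Fin 2) (Fin 2) L)) i 1
        have : ((A : Matrix (Fin 2) (Fin 2) L) * (sl2diag δ : Matrix (Fin 2) (Fin 2) L)) i 1
            = (A : Matrix (Fin 2) (Fin 2) L) i 1 * ((δ⁻¹ : Lˣ) : L) := by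
          simp [sl2diag, Matrix.mul_apply, Fin.sum_univ_two]
        rw [this, ← hb, Units.val_inv_eq_inv_val]
        field_simp
  -- d is in H, pslK is in H
  have hdH : d ∈ H := Subgroup.mem_sup_right (Subgroup.subset_closure rfl)
  have hKH : pslK K L ≤ H := le_sup_left
  -- H is contained in the fixed points
  have hfixsub : H ≤ MonoidHom.eqLocus (psl2Map (f : L →+* L)) (MonoidHom.id (PSL2 L)) := by
    refine sup_le ?_ ((Subgroup.closure_le _).mpr ?_)
    · rintro y ⟨B, rfl⟩
      show psl2Map (f : L →+* L) (π (Matrix.SpecialLinearGroup.map (algebraMap K L) B))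
          = π (Matrix.SpecialLinearGroup.map (algebraMap K L) B)
      rw [hmk, hcomm B]
    · intro y hy
      rw [Set.mem_singleton_iff] at hy
      subst hy
      exact part1
  -- part 3
  have part3 : ∀ x : PSL2 L, psl2Map (f : L →+* L) x = x ↔ x ∈ H := by
    intro x
    constructor
    · intro hx
      obtain ⟨A, rfl⟩ := QuotientGroup.mk'_surjective (Subgroup.center (SL2 L)) x
      rcases key A hx with ⟨B, hB⟩ | ⟨B, hB⟩
      · exact hKH (hmemK A B hB)
      · have hA : A = Matrix.SpecialLinearGroup.map (algebraMap K L) B * (sl2diag δ)⁻¹ :=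
          eq_mul_inv_of_mul_eq hB.symm
        rw [hA, MonoidHom.map_mul, MonoidHom.map_inv]
        exact Subgroup.mul_mem _ (hKH (hmemK _ B rfl)) (Subgroup.inv_mem _ hdH)
    · intro hx
      exact hfixsub hx
  -- d is not in pslK
  have hd_not : d ∉ pslK K L := by
    rintro ⟨B, hB⟩
    have hB' : π (Matrix.SpecialLinearGroup.map (algebraMap K L) B) = π (sl2diag δ) := hB
    have hcontra : ∀ a : K, algebraMap K L a = (δ : L) → False := by
      intro a ha
      have hfix' : f (δ : L) = (δ : L) := (hfix _).mpr ⟨a, ha⟩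
      rw [hfδ] at hfix'
      have h2δ : (2 : L) * (δ : L) = 0 := by linear_combination -hfix'
      rcases mul_eq_zero.mp h2δ with h' | h'
      · exact h2L h'
      · exact hδ0 h'
    rcases (mk_eq_mk_iff _ _).mp hB' with h | h
    · apply hcontra (B 0 0)
      have := congrArg (fun M : SL2 L => (M : Matrix (Fin 2) (Fin 2) L) 0 0) h
      simpa [hmcoK, sl2diag, Matrix.map_apply] using this
    · apply hcontra (-(B 0 0))
      have h00 : algebraMap K L (B 0 0) = -(δ : L) := by
        have := congrArg (fun M : SL2 L => (M : Matrix (Fin 2) (Fin 2) L) 0 0) h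
        simpa [hmcoK, sl2diag_coe, Matrix.map_apply, Matrix.SpecialLinearGroup.coe_neg] using this
      rw [map_neg, h00, neg_neg]
  -- part 2
  have part2 : (pslK K L).relIndex H = 2 := by
    rw [Subgroup.relIndex, Subgroup.index_eq_two_iff]
    refine ⟨⟨d, hdH⟩, ?_⟩
    rintro ⟨y, hy⟩
    have hyfix := (part3 y).mpr hy
    obtain ⟨A, rfl⟩ := QuotientGroup.mk'_surjective (Subgroup.center (SL2 L)) y
    have hcoe_mul : ((⟨π A, hy⟩ * ⟨d, hdH⟩ : H) : PSL2 L) = π A * d := rfl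
    rcases key A hyfix with ⟨B, hB⟩ | ⟨B, hB⟩
    · have hmemA : π A ∈ pslK K L := hmemK A B hB
      refine Or.inr ⟨Subgroup.mem_subgroupOf.mpr hmemA, ?_⟩
      intro hmem
      rw [Subgroup.mem_subgroupOf, hcoe_mul] at hmem
      apply hd_not
      have := Subgroup.mul_mem _ (Subgroup.inv_mem _ hmemA) hmem
      rwa [inv_mul_cancel_left] at this
    · have hmemAd : π A * d ∈ pslK K L := by
        have h1 : π (A * sl2diag δ) ∈ pslK K L := hmemK _ B hB
        rwa [MonoidHom.map_mul] at h1
      refine Or.inl ⟨?_, ?_⟩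
      · rw [Subgroup.mem_subgroupOf, hcoe_mul]
        exact hmemAd
      · intro hmem
        rw [Subgroup.mem_subgroupOf] at hmem
        apply hd_not
        have := Subgroup.mul_mem _ (Subgroup.inv_mem _ hmem) hmemAd
        rwa [inv_mul_cancel_left] at this
  exact ⟨part1, part2, part3⟩
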